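/- Let b ∈ ℝ, let f: ℝ² → ℝ be C¹, and let U ⊆ ℝ² be a bounded measurable set such that ∇_f f ∈ L²(U). Define f̂(x,z) = f(x, z + b·x²/2) + b·x (so that Γ_{f̂} is the image of Γ_f under the shear automorphism P_b) and let ĥ: ℝ² → ℝ², ĥ(x,z) = (x, z − b·x²/2). Then ĥ is a measure-preserving bijection of ℝ² and E_{ĥ(U)}(f̂) = E_U(f) + (b²/2)·μ(U) + b·∫_U ∇_f f dμ. -/

import Mathlib

open MeasureTheory Set

/-- Partial derivative in the `x` (first) direction. -/
noncomputable def pdx (g : ℝ × ℝ → ℝ) (p : ℝ × ℝ) : ℝ := fderiv ℝ g p (1, 0)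

/-- Partial derivative in the `z` (second) direction. -/
noncomputable def pdz (g : ℝ × ℝ → ℝ) (p : ℝ × ℝ) : ℝ := fderiv ℝ g p (0, 1)

/-- The intrinsic gradient operator `∇_f g = ∂_x g − f·∂_z g`. -/
noncomputable def igrad (f g : ℝ × ℝ → ℝ) (p : ℝ × ℝ) : ℝ := pdx g p - f p * pdz g p

/-- The intrinsic Dirichlet energy `E_U(f) = (1/2)∫_U (∇_f f)² dμ`. -/
noncomputable def energy (U : Set (ℝ × ℝ)) (f : ℝ × ℝ → ℝ) : ℝ :=
  (1 / 2) * ∫ p in U, (igrad f f p) ^ 2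

/-- Key pointwise computation: the intrinsic gradient of the sheared function. -/
lemma igrad_shear (b : ℝ) (f : ℝ × ℝ → ℝ) (hf : ContDiff ℝ 1 f)
    (fhat : ℝ × ℝ → ℝ)
    (hfhat : ∀ x z : ℝ, fhat (x, z) = f (x, z + b * x ^ 2 / 2) + b * x)
    (p : ℝ × ℝ) :
    igrad fhat fhat p = igrad f f (p.1, p.2 + b * p.1 ^ 2 / 2) + b := by
  set φ : ℝ × ℝ → ℝ × ℝ := fun q => (q.1, q.2 + b * q.1 ^ 2 / 2) with hφdef
  set q : ℝ × ℝ := φ p with hq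
  set D : ℝ × ℝ →L[ℝ] ℝ := fderiv ℝ f q with hD
  set L : ℝ × ℝ →L[ℝ] ℝ × ℝ :=
    (ContinuousLinearMap.fst ℝ ℝ ℝ).prod
      (ContinuousLinearMap.snd ℝ ℝ ℝ + (b * p.1) • ContinuousLinearMap.fst ℝ ℝ ℝ) with hL
  have hφ : HasFDerivAt φ L p := by
    have h1 : HasFDerivAt (fun q : ℝ × ℝ => q.1) (ContinuousLinearMap.fst ℝ ℝ ℝ) p :=
      hasFDerivAt_fst
    have hmul : HasFDerivAt (fun q : ℝ × ℝ => q.1 * q.1)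
        (p.1 • ContinuousLinearMap.fst ℝ ℝ ℝ + p.1 • ContinuousLinearMap.fst ℝ ℝ ℝ) p :=
      h1.mul h1
    have h4 := hasFDerivAt_snd.add (hmul.const_mul (b / 2))
    have hfun : (fun q : ℝ × ℝ => q.2 + b / 2 * (q.1 * q.1))
        = fun q : ℝ × ℝ => q.2 + b * q.1 ^ 2 / 2 := by funext q; ring
    rw [show (Prod.snd + fun y : ℝ × ℝ => b / 2 * (y.1 * y.1)) = fun q : ℝ × ℝ => q.2 + b * q.1 ^ 2 / 2 from hfun] at h4
    have h2 : HasFDerivAt (fun q : ℝ × ℝ => q.2 + b * q.1 ^ 2 / 2)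
        (ContinuousLinearMap.snd ℝ ℝ ℝ + (b * p.1) • ContinuousLinearMap.fst ℝ ℝ ℝ) p := by
      refine h4.congr_fderiv ?_
      apply ContinuousLinearMap.ext
      intro v
      simp [ContinuousLinearMap.smul_apply, smul_eq_mul]
      ring
    exact h1.prodMk h2
  have hDf : HasFDerivAt f D q := (hf.differentiable one_ne_zero q).hasFDerivAt
  have hcomp : HasFDerivAt (fun r => f (φ r)) (D.comp L) p := hDf.comp p hφ
  have hlin : HasFDerivAt (fun r : ℝ × ℝ => b * r.1)
      (b • ContinuousLinearMap.fst ℝ ℝ ℝ) p := hasFDerivAt_fst.const_mul b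
  have hfhat' : fhat = fun r : ℝ × ℝ => f (φ r) + b * r.1 := by
    funext r
    have := hfhat r.1 r.2
    simpa [hφdef] using this
  have hF : HasFDerivAt fhat (D.comp L + b • ContinuousLinearMap.fst ℝ ℝ ℝ) p := by
    rw [hfhat']
    exact hcomp.add hlin
  have hfd : fderiv ℝ fhat p = D.comp L + b • ContinuousLinearMap.fst ℝ ℝ ℝ := hF.fderiv
  have hL10 : L (1, 0) = ((1 : ℝ), b * p.1) := by
    simp [hL]
  have hL01 : L (0, 1) = ((0 : ℝ), (1 : ℝ)) := by
    simp [hL]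
  have hD10 : D ((1 : ℝ), b * p.1) = D (1, 0) + b * p.1 * D (0, 1) := by
    have : ((1 : ℝ), b * p.1) = (1, 0) + (b * p.1) • ((0 : ℝ), (1 : ℝ)) := by
      simp [Prod.ext_iff]
    rw [this, map_add, ContinuousLinearMap.map_smul]
    simp [smul_eq_mul]
  have hpx : pdx fhat p = D (1, 0) + b * p.1 * D (0, 1) + b := by
    simp only [pdx, hfd, ContinuousLinearMap.add_apply, ContinuousLinearMap.comp_apply,
      ContinuousLinearMap.smul_apply, ContinuousLinearMap.coe_fst', hL10, hD10]
    simp [smul_eq_mul]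
  have hpz : pdz fhat p = D (0, 1) := by
    simp only [pdz, hfd, ContinuousLinearMap.add_apply, ContinuousLinearMap.comp_apply,
      ContinuousLinearMap.smul_apply, ContinuousLinearMap.coe_fst', hL01]
    simp
  have hval : fhat p = f q + b * p.1 := by
    rw [hfhat']
  have hqx : pdx f q = D (1, 0) := rfl
  have hqz : pdz f q = D (0, 1) := rfl
  simp only [igrad, hpx, hpz, hval, hqx, hqz, show (p.1, p.2 + b * p.1 ^ 2 / 2) = q from rfl]
  ring

/-- under the shear `P_b`, with `f̂(x,z) = f(x, z + b·x²/2) + b·x` and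
`ĥ(x,z) = (x, z − b·x²/2)`, the map `ĥ` is a measure-preserving bijection of `ℝ²` and
`E_{ĥ(U)}(f̂) = E_U(f) + (b²/2)·μ(U) + b·∫_U ∇_f f dμ`. -/
theorem stmt6 (b : ℝ) (f : ℝ × ℝ → ℝ) (hf : ContDiff ℝ 1 f)
    (U : Set (ℝ × ℝ)) (hUb : Bornology.IsBounded U) (hUm : MeasurableSet U)
    (hL2 : MemLp (igrad f f) 2 (volume.restrict U))
    (fhat : ℝ × ℝ → ℝ)
    (hfhat : ∀ x z : ℝ, fhat (x, z) = f (x, z + b * x ^ 2 / 2) + b * x)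
    (hhat : ℝ × ℝ → ℝ × ℝ)
    (hh : ∀ p : ℝ × ℝ, hhat p = (p.1, p.2 - b * p.1 ^ 2 / 2)) :
    MeasurePreserving hhat volume volume ∧ Function.Bijective hhat ∧
      energy (hhat '' U) fhat
        = energy U f + b ^ 2 / 2 * (volume U).toReal + b * ∫ p in U, igrad f f p := by
  have hhfun : hhat = fun p : ℝ × ℝ => (p.1, p.2 - b * p.1 ^ 2 / 2) := funext hh
  set φ : ℝ × ℝ → ℝ × ℝ := fun q => (q.1, q.2 + b * q.1 ^ 2 / 2) with hφdef
  have hinv1 : ∀ p, φ (hhat p) = p := by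
    intro p; rw [hh]; simp [hφdef]
  have hinv2 : ∀ p, hhat (φ p) = p := by
    intro p; rw [hh]; simp [hφdef]
  -- measure preserving
  have hmp : MeasurePreserving hhat volume volume := by
    rw [hhfun]
    rw [Measure.volume_eq_prod]
    exact (MeasurePreserving.id volume).skew_product
      (g := fun x y => y - b * x ^ 2 / 2)
      (by fun_prop)
      (Filter.Eventually.of_forall fun x => (measurePreserving_sub_right volume _).map_eq)
  -- bijective
  have hbij : Function.Bijective hhat :=
    Function.bijective_iff_has_inverse.mpr ⟨φ, hinv1, hinv2⟩
  -- measurable embedding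
  have hcont : Continuous hhat := by rw [hhfun]; fun_prop
  have hcontφ : Continuous φ := by fun_prop
  have hemb : MeasurableEmbedding hhat :=
    (Homeomorph.mk ⟨hhat, φ, hinv1, hinv2⟩ hcont hcontφ).measurableEmbedding
  refine ⟨hmp, hbij, ?_⟩
  -- the key pointwise identity composed with hhat
  have hkey : ∀ p : ℝ × ℝ, igrad fhat fhat (hhat p) = igrad f f p + b := by
    intro p
    rw [igrad_shear b f hf fhat hfhat (hhat p)]
    have : ((hhat p).1, (hhat p).2 + b * (hhat p).1 ^ 2 / 2) = p := hinv1 p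
    rw [this]
  -- change of variables
  have hchg : (∫ p in hhat '' U, (igrad fhat fhat p) ^ 2)
      = ∫ p in U, (igrad f f p + b) ^ 2 := by
    rw [hmp.setIntegral_image_emb hemb]
    exact setIntegral_congr_fun hUm fun p _ => by rw [hkey p]
  -- finiteness and integrability
  have hμU : volume U < ⊤ := hUb.measure_lt_top
  haveI : IsFiniteMeasure (volume.restrict U) :=
    ⟨by rwa [Measure.restrict_apply_univ]⟩
  have hg2 : Integrable (fun p => (igrad f f p) ^ 2) (volume.restrict U) :=
    hL2.integrable_sq
  have hg1 : Integrable (igrad f f) (volume.restrict U) :=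
    hL2.integrable one_le_two
  have hexp : (∫ p in U, (igrad f f p + b) ^ 2)
      = (∫ p in U, (igrad f f p) ^ 2) + (b ^ 2 * (volume U).toReal
        + 2 * b * ∫ p in U, igrad f f p) := by
    have h1 : ∀ p : ℝ × ℝ, (igrad f f p + b) ^ 2
        = (igrad f f p) ^ 2 + (b ^ 2 + 2 * b * igrad f f p) := fun p => by ring
    have hInt2 : Integrable (fun p : ℝ × ℝ => b ^ 2 + 2 * b * igrad f f p)
        (volume.restrict U) := (integrable_const _).add (hg1.const_mul _)
    simp_rw [h1]
    rw [integral_add hg2 hInt2, integral_add (integrable_const _) (hg1.const_mul _),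
      integral_const, integral_const_mul, measureReal_restrict_apply_univ, measureReal_def]
    simp only [smul_eq_mul]
    ring
  rw [energy, hchg, hexp, energy]
  ring
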